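/- For any function f : {-1,1}^n → {-1,1}, the margin of F = f ∘ XOR is at most 4 times the discrepancy of F: m(f ∘ XOR) ≤ 4·disc(f ∘ XOR). -/

import Mathlib

open scoped BigOperators

noncomputable section

/-- sign value of a bit: `true` ↦ -1, `false` ↦ 1 (±1 encoding of the cube). -/
def sgnv (b : Bool) : ℝ := if b then -1 else 1

/-- the Fourier character χ_S on the ±1 cube. -/
def chi {ι : Type*} (S : Finset ι) (x : ι → Bool) : ℝ := ∏ i ∈ S, sgnv (x i)

/-- evaluation of the multilinear polynomial with coefficients `c`. -/
def pEval {ι : Type*} [Fintype ι] [DecidableEq ι] (c : Finset ι → ℝ) (x : ι → Bool) : ℝ :=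
  ∑ S : Finset ι, c S * chi S x

/-- weight of a polynomial: sum of absolute values of its coefficients. -/
def wt {ι : Type*} [Fintype ι] [DecidableEq ι] (c : Finset ι → ℝ) : ℝ :=
  ∑ S : Finset ι, |c S|

/-- `c` sign represents `f`. -/
def SignRep {ι : Type*} [Fintype ι] [DecidableEq ι] (c : Finset ι → ℝ)
    (f : (ι → Bool) → ℝ) : Prop := ∀ x, 0 < pEval c x * f x

/-- polynomial margin of `f`. -/
def margin {ι : Type*} [Fintype ι] [DecidableEq ι] (f : (ι → Bool) → ℝ) : ℝ :=
  sSup {δ : ℝ | ∃ c : Finset ι → ℝ, wt c ≤ 1 ∧ SignRep c f ∧ ∀ x, δ ≤ pEval c x * f x}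

/-- `λ` is a probability distribution on the finite type `α`. -/
def IsDistrib {α : Type*} [Fintype α] (lam : α → ℝ) : Prop :=
  (∀ a, 0 ≤ lam a) ∧ ∑ a, lam a = 1

/-- the discrepancy of the two-party function `F` under the distribution `lam`:
the maximum over rectangles `S × T` of `|∑_{(x,y)∈S×T} F x y · lam (x,y)|`. -/
def discUnder {α β : Type*} [Fintype α] [Fintype β] (lam : α × β → ℝ)
    (F : α → β → ℝ) : ℝ :=
  sSup {r : ℝ | ∃ S : Finset α, ∃ T : Finset β,
    r = |∑ x ∈ S, ∑ y ∈ T, F x y * lam (x, y)|}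

/-- the discrepancy of `F`: the minimum over distributions of `discUnder`. -/
def disc {α β : Type*} [Fintype α] [Fintype β] (F : α → β → ℝ) : ℝ :=
  sInf {d : ℝ | ∃ lam : α × β → ℝ, IsDistrib lam ∧ discUnder lam F = d}

/-- `f ∘ XOR` as a function on the `2n`-dimensional cube (indexed by `Fin n ⊕ Fin n`). -/
def fXOR {n : ℕ} (f : (Fin n → Bool) → ℝ) : ((Fin n ⊕ Fin n) → Bool) → ℝ :=
  fun v => f (fun i => xor (v (Sum.inl i)) (v (Sum.inr i)))

/-- `f ∘ XOR` as a two-party function. -/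
def fXOR2 {n : ℕ} (f : (Fin n → Bool) → ℝ) : (Fin n → Bool) → (Fin n → Bool) → ℝ :=
  fun x y => f (fun i => xor (x i) (y i))

open Finset

lemma chi_pm {ι : Type*} (S : Finset ι) (x : ι → Bool) : chi S x = 1 ∨ chi S x = -1 := by
  unfold chi
  refine Finset.prod_induction _ (fun r => r = 1 ∨ r = -1) ?_ (Or.inl rfl) ?_
  · rintro a b (ha | ha) (hb | hb) <;> simp [ha, hb]
  · intro i _
    unfold sgnv
    by_cases h : x i <;> simp [h]

lemma chi_elim {n : ℕ} (S : Finset (Fin n ⊕ Fin n)) (x y : Fin n → Bool) :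
    chi S (Sum.elim x y) = chi S.toLeft x * chi S.toRight y := by
  unfold chi
  rw [← Finset.toLeft_disjSum_toRight (u := S), Finset.prod_disjSum]
  simp

lemma rect_le {α β : Type*} [Fintype α] [Fintype β] (lam : α × β → ℝ) (F : α → β → ℝ)
    (S : Finset α) (T : Finset β) :
    |∑ x ∈ S, ∑ y ∈ T, F x y * lam (x, y)| ≤ discUnder lam F := by
  classical
  apply le_csSup
  · have : {r : ℝ | ∃ S : Finset α, ∃ T : Finset β,
        r = |∑ x ∈ S, ∑ y ∈ T, F x y * lam (x, y)|} =
        Set.range (fun p : Finset α × Finset β =>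
          |∑ x ∈ p.1, ∑ y ∈ p.2, F x y * lam (x, y)|) := by
      ext r
      simp [Set.mem_range, Prod.exists, eq_comm]
    rw [this]
    exact (Set.finite_range _).bddAbove
  · exact ⟨S, T, rfl⟩

lemma discUnder_nonneg {α β : Type*} [Fintype α] [Fintype β] (lam : α × β → ℝ)
    (F : α → β → ℝ) : 0 ≤ discUnder lam F := by
  simpa using rect_le lam F ∅ ∅

lemma abs_signed_sum_le {α β : Type*} [Fintype α] [Fintype β] (lam : α × β → ℝ)
    (F : α → β → ℝ) (e : α → ℝ) (η : β → ℝ)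
    (he : ∀ x, e x = 1 ∨ e x = -1) (hη : ∀ y, η y = 1 ∨ η y = -1) :
    |∑ x, ∑ y, F x y * lam (x, y) * (e x * η y)| ≤ 4 * discUnder lam F := by
  classical
  obtain ⟨Q, R, hQR⟩ : ∃ Q R : Finset β, ∀ x : α, ∑ y, η y * (F x y * lam (x, y))
      = (∑ y ∈ Q, F x y * lam (x, y)) - ∑ y ∈ R, F x y * lam (x, y) := by
    refine ⟨univ.filter (fun y => η y = 1), univ.filter (fun y => ¬ η y = 1), ?_⟩
    intro x
    rw [← Finset.sum_filter_add_sum_filter_not univ (fun y => η y = 1)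
      (fun y => η y * (F x y * lam (x, y)))]
    have h1 : ∑ y ∈ univ.filter (fun y => η y = 1), η y * (F x y * lam (x, y))
        = ∑ y ∈ univ.filter (fun y => η y = 1), F x y * lam (x, y) :=
      Finset.sum_congr rfl fun y hy => by rw [(Finset.mem_filter.mp hy).2, one_mul]
    have h2 : ∑ y ∈ univ.filter (fun y => ¬ η y = 1), η y * (F x y * lam (x, y))
        = -∑ y ∈ univ.filter (fun y => ¬ η y = 1), F x y * lam (x, y) := by
      rw [← Finset.sum_neg_distrib]
      apply Finset.sum_congr rfl
      intro y hy
      rcases hη y with h' | h'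
      · exact absurd h' (Finset.mem_filter.mp hy).2
      · rw [h']; ring
    rw [h1, h2]; ring
  obtain ⟨P, N, hPN⟩ : ∃ P N : Finset α,
      (∑ x, e x * ((∑ y ∈ Q, F x y * lam (x, y)) - ∑ y ∈ R, F x y * lam (x, y)))
      = (∑ x ∈ P, ((∑ y ∈ Q, F x y * lam (x, y)) - ∑ y ∈ R, F x y * lam (x, y)))
        - ∑ x ∈ N, ((∑ y ∈ Q, F x y * lam (x, y)) - ∑ y ∈ R, F x y * lam (x, y)) := by
    refine ⟨univ.filter (fun x => e x = 1), univ.filter (fun x => ¬ e x = 1), ?_⟩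
    rw [← Finset.sum_filter_add_sum_filter_not univ (fun x => e x = 1)]
    have h1 := Finset.sum_congr (rfl : univ.filter (fun x => e x = 1) = _)
      (fun x hx => by rw [(Finset.mem_filter.mp hx).2, one_mul] :
        ∀ x ∈ univ.filter (fun x => e x = 1),
          e x * ((∑ y ∈ Q, F x y * lam (x, y)) - ∑ y ∈ R, F x y * lam (x, y))
          = (∑ y ∈ Q, F x y * lam (x, y)) - ∑ y ∈ R, F x y * lam (x, y))
    have h2 : ∑ x ∈ univ.filter (fun x => ¬ e x = 1),
        e x * ((∑ y ∈ Q, F x y * lam (x, y)) - ∑ y ∈ R, F x y * lam (x, y))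
        = -∑ x ∈ univ.filter (fun x => ¬ e x = 1),
          ((∑ y ∈ Q, F x y * lam (x, y)) - ∑ y ∈ R, F x y * lam (x, y)) := by
      rw [← Finset.sum_neg_distrib]
      apply Finset.sum_congr rfl
      intro x hx
      rcases he x with h' | h'
      · exact absurd h' (Finset.mem_filter.mp hx).2
      · rw [h']; ring
    rw [h1, h2]; ring
  have htot : ∑ x, ∑ y, F x y * lam (x, y) * (e x * η y)
      = ((∑ x ∈ P, ∑ y ∈ Q, F x y * lam (x, y)) - ∑ x ∈ P, ∑ y ∈ R, F x y * lam (x, y))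
        - ((∑ x ∈ N, ∑ y ∈ Q, F x y * lam (x, y)) - ∑ x ∈ N, ∑ y ∈ R, F x y * lam (x, y)) := by
    have inner : ∀ x, ∑ y, F x y * lam (x, y) * (e x * η y)
        = e x * ∑ y, η y * (F x y * lam (x, y)) := by
      intro x
      rw [Finset.mul_sum]
      exact Finset.sum_congr rfl fun y _ => by ring
    simp_rw [inner, hQR]
    rw [hPN, Finset.sum_sub_distrib, Finset.sum_sub_distrib]
  rw [htot]
  have b1 := rect_le lam F P Q
  have b2 := rect_le lam F P R
  have b3 := rect_le lam F N Q
  have b4 := rect_le lam F N R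
  set A := ∑ x ∈ P, ∑ y ∈ Q, F x y * lam (x, y)
  set B := ∑ x ∈ P, ∑ y ∈ R, F x y * lam (x, y)
  set C := ∑ x ∈ N, ∑ y ∈ Q, F x y * lam (x, y)
  set D := ∑ x ∈ N, ∑ y ∈ R, F x y * lam (x, y)
  have t1 : |A - B - (C - D)| ≤ |A - B| + |C - D| := abs_sub _ _
  have t2 : |A - B| ≤ |A| + |B| := abs_sub _ _
  have t3 : |C - D| ≤ |C| + |D| := abs_sub _ _
  linarith


lemma key_bound {n : ℕ} (f : (Fin n → Bool) → ℝ)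
    (lam : ((Fin n → Bool) × (Fin n → Bool)) → ℝ) (hlam : IsDistrib lam)
    (c : Finset (Fin n ⊕ Fin n) → ℝ) (hw : wt c ≤ 1) (δ : ℝ)
    (hδ : ∀ v, δ ≤ pEval c v * fXOR f v) :
    δ ≤ 4 * discUnder lam (fXOR2 f) := by
  classical
  set F := fXOR2 f with hF
  have hnn := discUnder_nonneg lam F
  have h1 : δ ≤ ∑ p : (Fin n → Bool) × (Fin n → Bool),
      lam p * (pEval c (Sum.elim p.1 p.2) * F p.1 p.2) := by
    have hd : δ = ∑ p : (Fin n → Bool) × (Fin n → Bool), lam p * δ := by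
      rw [← Finset.sum_mul, hlam.2, one_mul]
    rw [hd]
    apply Finset.sum_le_sum
    intro p _
    exact mul_le_mul_of_nonneg_left (hδ (Sum.elim p.1 p.2)) (hlam.1 p)
  have h2 : ∑ p : (Fin n → Bool) × (Fin n → Bool),
      lam p * (pEval c (Sum.elim p.1 p.2) * F p.1 p.2)
      = ∑ S : Finset (Fin n ⊕ Fin n), c S *
          ∑ x, ∑ y, F x y * lam (x, y) * (chi S.toLeft x * chi S.toRight y) := by
    rw [Fintype.sum_prod_type]
    have step : ∀ x y, lam (x, y) * (pEval c (Sum.elim x y) * F x y)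
        = ∑ S : Finset (Fin n ⊕ Fin n),
            c S * (F x y * lam (x, y) * (chi S.toLeft x * chi S.toRight y)) := by
      intro x y
      unfold pEval
      rw [Finset.sum_mul, Finset.mul_sum]
      apply Finset.sum_congr rfl
      intro S _
      rw [chi_elim]
      ring
    simp_rw [step]
    conv_lhs => enter [2, x]; rw [Finset.sum_comm]
    rw [Finset.sum_comm]
    apply Finset.sum_congr rfl
    intro S _
    simp_rw [Finset.mul_sum]
  have h3 : ∀ S : Finset (Fin n ⊕ Fin n),
      c S * (∑ x, ∑ y, F x y * lam (x, y) * (chi S.toLeft x * chi S.toRight y))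
        ≤ |c S| * (4 * discUnder lam F) := by
    intro S
    have hb := abs_signed_sum_le lam F (chi S.toLeft) (chi S.toRight)
      (fun x => chi_pm _ _) (fun y => chi_pm _ _)
    calc c S * (∑ x, ∑ y, F x y * lam (x, y) * (chi S.toLeft x * chi S.toRight y))
        ≤ |c S * (∑ x, ∑ y, F x y * lam (x, y) * (chi S.toLeft x * chi S.toRight y))| :=
          le_abs_self _
      _ = |c S| * |∑ x, ∑ y, F x y * lam (x, y) * (chi S.toLeft x * chi S.toRight y)| :=
          abs_mul _ _
      _ ≤ |c S| * (4 * discUnder lam F) :=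
          mul_le_mul_of_nonneg_left hb (abs_nonneg _)
  have h4 : ∑ S : Finset (Fin n ⊕ Fin n), c S *
        (∑ x, ∑ y, F x y * lam (x, y) * (chi S.toLeft x * chi S.toRight y))
      ≤ ∑ S : Finset (Fin n ⊕ Fin n), |c S| * (4 * discUnder lam F) :=
    Finset.sum_le_sum fun S _ => h3 S
  have h5 : ∑ S : Finset (Fin n ⊕ Fin n), |c S| * (4 * discUnder lam F)
      = wt c * (4 * discUnder lam F) := by
    rw [wt, Finset.sum_mul]
  have h6 : wt c * (4 * discUnder lam F) ≤ 1 * (4 * discUnder lam F) :=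
    mul_le_mul_of_nonneg_right hw (by linarith)
  rw [h2] at h1
  rw [h5] at h4
  linarith


/-- for any `f : {-1,1}^n → {-1,1}`,
`m(f ∘ XOR) ≤ 4·disc(f ∘ XOR)`. -/
theorem margin_fXOR_le_four_disc (n : ℕ) (f : (Fin n → Bool) → ℝ)
    (hf : ∀ x, f x = 1 ∨ f x = -1) :
    margin (fXOR f) ≤ 4 * disc (fXOR2 f) := by
  have hdnn : 0 ≤ disc (fXOR2 f) := by
    apply Real.sInf_nonneg
    rintro d ⟨lam, _, rfl⟩
    exact discUnder_nonneg _ _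
  apply Real.sSup_le
  · rintro δ ⟨c, hw, _, hlb⟩
    have hne : {d : ℝ | ∃ lam : ((Fin n → Bool) × (Fin n → Bool)) → ℝ,
        IsDistrib lam ∧ discUnder lam (fXOR2 f) = d}.Nonempty := by
      refine ⟨_, fun _ => (Fintype.card ((Fin n → Bool) × (Fin n → Bool)) : ℝ)⁻¹,
        ⟨fun a => by positivity, ?_⟩, rfl⟩
      rw [Finset.sum_const, nsmul_eq_mul, Finset.card_univ]
      have hc : (0:ℝ) < (Fintype.card ((Fin n → Bool) × (Fin n → Bool)) : ℝ) := by
        exact_mod_cast Fintype.card_pos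
      field_simp
    have hq : δ / 4 ≤ disc (fXOR2 f) := by
      apply le_csInf hne
      rintro d ⟨lam, hlam, rfl⟩
      linarith [key_bound f lam hlam c hw δ hlb]
    linarith
  · linarith

end
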